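/- arXiv:2410.11159 — 4 statements merged into one kernel-verified Lean document; each statement's English description precedes it below -/
import Mathlib

section
/- Let G = D_n be a dihedral group of order 2n generated by r of order n and s of order 2 with (sr)^2 = 1, and let N_1, ..., N_k be normal subgroups of G with trivial total intersection. Then the intersection of the subgroups G'N_1, ..., G'N_k equals the derived subgroup G' = ⟨r^2⟩. -/
open DihedralGroup Subgroup Pointwise
open scoped commutatorElement

variable {n : ℕ}

lemma r_inv' (i : ZMod n) : (r i)⁻¹ = r (-i) := rfl
lemma sr_inv' (i : ZMod n) : (sr i)⁻¹ = sr i := rfl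

lemma r_one_zpow (t : ℤ) : (r 1 : DihedralGroup n) ^ t = r (t : ZMod n) := by
  cases t with
  | ofNat a => simp [r_one_pow]
  | negSucc a =>
      rw [zpow_negSucc, r_one_pow]
      simp only [Int.cast_negSucc]
      rfl

lemma r_two_zpow (t : ℤ) : (r (2 : ZMod n)) ^ t = r ((2 * t : ℤ) : ZMod n) := by
  rw [show (r (2:ZMod n)) = (r 1 : DihedralGroup n) ^ (2:ℤ) by rw [_root_.r_one_zpow]; norm_num,
    ← zpow_mul, _root_.r_one_zpow]

lemma C_normal : (zpowers (r (2 : ZMod n))).Normal := by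
  constructor
  rintro x ⟨t, rfl⟩ g
  rcases g with i | i
  · exact ⟨t, by simp only; rw [r_two_zpow]; simp [r_inv']⟩
  · refine ⟨-t, ?_⟩
    simp only
    rw [r_two_zpow, r_two_zpow, sr_inv']
    simp

lemma aux_mem [NeZero n] (z : ZMod n) : r ((2 : ZMod n) * z) ∈ zpowers (r (2 : ZMod n)) := by
  refine ⟨(z.val : ℤ), ?_⟩
  simp only
  rw [r_two_zpow]
  congr 1
  push_cast
  rw [ZMod.natCast_val, ZMod.cast_id]

lemma comm_eq [NeZero n] :
    commutator (DihedralGroup n) = zpowers (r (2 : ZMod n)) := by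
  apply le_antisymm
  · rw [commutator_def, Subgroup.commutator_le]
    rintro (i | i) - (j | j) -
    · simp [commutatorElement_def, r_inv']
    · have := aux_mem (n := n) i
      convert this using 2
      simp [commutatorElement_def, r_inv', sr_inv']
      ring_nf
    · have := aux_mem (n := n) (-j)
      convert this using 2
      simp [commutatorElement_def, r_inv', sr_inv']
      ring_nf
    · have := aux_mem (n := n) (j - i)
      convert this using 2
      simp [commutatorElement_def, r_inv', sr_inv']
      ring_nf
  · rw [zpowers_le]
    have : ⁅(r 1 : DihedralGroup n), sr 0⁆ = r (2 : ZMod n) := by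
      simp [commutatorElement_def, r_inv', sr_inv']
      ring_nf
    rw [← this]
    exact commutator_mem_commutator (mem_top _) (mem_top _)

/-- Let `G = Dₙ` be the dihedral group of order `2n` and `N₁, …, N_k` normal subgroups
with trivial total intersection. Then `⋂ᵢ G'Nᵢ = G'`, and `G' = ⟨r²⟩`. -/
theorem stmt4 {n : ℕ} (hn : 0 < n) {k : ℕ}
    (N : Fin k → Subgroup (DihedralGroup n)) [∀ i, (N i).Normal]
    (h : (⨅ i, N i) = ⊥) :
    (⨅ i, commutator (DihedralGroup n) ⊔ N i) = commutator (DihedralGroup n) ∧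
      commutator (DihedralGroup n) = Subgroup.zpowers (DihedralGroup.r (2 : ZMod n)) := by
  haveI : NeZero n := ⟨hn.ne'⟩
  haveI := C_normal (n := n)
  set C := zpowers (r (2 : ZMod n)) with hCdef
  have hC : commutator (DihedralGroup n) = C := comm_eq
  refine ⟨?_, hC⟩
  simp only [hC]
  have hval : ∀ j : ZMod n, ((j.val : ℕ) : ZMod n) = j := fun j => by
    rw [ZMod.natCast_val, ZMod.cast_id]
  have hmem_sup : ∀ (i : Fin k) (x : DihedralGroup n), x ∈ C ⊔ N i →
      ∃ c ∈ C, ∃ d ∈ N i, c * d = x := by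
    intro i x hxi
    have hset : x ∈ (C : Set (DihedralGroup n)) * (N i : Set (DihedralGroup n)) := by
      rw [← Subgroup.normal_mul]; exact hxi
    exact hset
  apply le_antisymm
  · intro x hx
    have hx' : ∀ i, x ∈ C ⊔ N i := fun i => (mem_iInf.mp hx) i
    rcases x with j | j
    · -- rotation case
      by_cases hxC : r j ∈ C
      · exact hxC
      exfalso
      -- n is even
      have hn2 : 2 ∣ n := by
        by_contra hodd
        apply hxC
        have h2 : ((2 * ((n + 1) / 2) : ℕ) : ZMod n) = 1 := by
          rw [Nat.mul_div_cancel' (by omega : 2 ∣ n + 1)]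
          push_cast [ZMod.natCast_self]
          ring
        have hj : j = 2 * ((((n + 1) / 2 : ℕ) : ZMod n) * j) := by
          calc j = 1 * j := (one_mul j).symm
            _ = ((2 * ((n + 1) / 2) : ℕ) : ZMod n) * j := by rw [h2]
            _ = 2 * ((((n + 1) / 2 : ℕ) : ZMod n) * j) := by push_cast; ring
        rw [hj]; exact aux_mem _
      -- j.val is odd
      have hjodd : ¬ 2 ∣ j.val := by
        rintro ⟨c, hc⟩
        apply hxC
        have hj : j = 2 * ((c : ℕ) : ZMod n) := by
          rw [← hval j, hc]; push_cast; ring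
        rw [hj]; exact aux_mem _
      -- the odd part of n
      set m := ordCompl[2] n with hm
      have hm_pos : 0 < m := Nat.ordCompl_pos 2 hn.ne'
      have hm_dvd : m ∣ n := Nat.ordCompl_dvd n 2
      have hm_odd : ¬ 2 ∣ m := Nat.not_dvd_ordCompl Nat.prime_two hn.ne'
      have hm_lt : m < n := lt_of_le_of_ne (Nat.le_of_dvd hn hm_dvd)
        (fun hmn => hm_odd (by rw [hmn]; exact hn2))
      -- r 1 ^ m belongs to every N i
      have key : ∀ i, (r 1 : DihedralGroup n) ^ (m : ℤ) ∈ N i := by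
        intro i
        obtain ⟨c, hc, d, hd, hcd⟩ := hmem_sup i _ (hx' i)
        obtain ⟨t, rfl⟩ := hc
        obtain ⟨e, he⟩ : ∃ e : ℤ, e = (j.val : ℤ) - 2 * t := ⟨_, rfl⟩
        have hdN : (r 1 : DihedralGroup n) ^ e ∈ N i := by
          have hde : d = (r 1 : DihedralGroup n) ^ e := by
            have hd2 : d = ((r (2:ZMod n)) ^ t)⁻¹ * r j := by
              rw [← hcd]; group
            rw [hd2, r_two_zpow, _root_.r_one_zpow, r_inv', r_mul_r, he]
            congr 1
            push_cast
            rw [hval j]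
            ring
          rwa [← hde]
        have he_odd : ¬ 2 ∣ e := by
          rintro ⟨c, hc⟩
          apply hjodd
          exact ⟨(c + t).toNat, by omega⟩
        have hg_e : ((Int.gcd e (n:ℤ) : ℕ) : ℤ) ∣ e := Int.gcd_dvd_left _ _
        have hg_n : Int.gcd e (n:ℤ) ∣ n := Int.ofNat_dvd.mp (Int.gcd_dvd_right _ _)
        have hg_odd : ¬ 2 ∣ Int.gcd e (n:ℤ) := by
          intro h2g
          exact he_odd (dvd_trans (by exact_mod_cast Int.ofNat_dvd.mpr h2g) hg_e)
        have hg_m : Int.gcd e (n:ℤ) ∣ m := by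
          have hcop : Nat.Coprime (Int.gcd e (n:ℤ)) (2 ^ (n.factorization 2)) :=
            Nat.Coprime.pow_right _ (Nat.coprime_two_right.mpr
              (Nat.odd_iff.mpr (by omega : Int.gcd e (n:ℤ) % 2 = 1)))
          refine hcop.dvd_of_dvd_mul_left ?_
          rwa [Nat.ordProj_mul_ordCompl_eq_self n 2]
        obtain ⟨w, hw⟩ : ((Int.gcd e (n:ℤ) : ℕ) : ℤ) ∣ (m : ℤ) := Int.ofNat_dvd.mpr hg_m
        have hbez : ((Int.gcd e (n:ℤ) : ℕ) : ℤ) = e * Int.gcdA e n + n * Int.gcdB e n :=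
          Int.gcd_eq_gcd_ab e n
        have hfinal : (r 1 : DihedralGroup n) ^ (m : ℤ) =
            ((r 1 : DihedralGroup n) ^ e) ^ (Int.gcdA e n * w) := by
          rw [← zpow_mul, hw, hbez]
          rw [show (e * Int.gcdA e n + ↑n * Int.gcdB e n) * w
              = e * (Int.gcdA e n * w) + (n : ℤ) * (Int.gcdB e n * w) by ring]
          rw [zpow_add, zpow_mul (r 1) (n:ℤ)]
          norm_cast
          rw [r_one_pow_n]
          group
        rw [hfinal]
        exact Subgroup.zpow_mem _ hdN _
      have hbot : (r 1 : DihedralGroup n) ^ (m : ℤ) ∈ (⊥ : Subgroup (DihedralGroup n)) := by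
        rw [← h]; exact mem_iInf.mpr key
      rw [Subgroup.mem_bot, _root_.r_one_zpow] at hbot
      have hcast : ((m : ℤ) : ZMod n) = 0 := by
        rwa [show (1 : DihedralGroup n) = r 0 from rfl, r.injEq] at hbot
      rw [Int.cast_natCast, ZMod.natCast_eq_zero_iff] at hcast
      exact absurd (Nat.le_of_dvd hm_pos hcast) (not_le.mpr hm_lt)
    · -- reflection case
      have hCle : ∀ i, C ≤ N i := by
        intro i
        obtain ⟨c, hc, d, hd, hcd⟩ := hmem_sup i _ (hx' i)
        obtain ⟨t, rfl⟩ := hc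
        have hde : d = sr (j + ((2 * t : ℤ) : ZMod n)) := by
          have hd2 : d = ((r (2:ZMod n)) ^ t)⁻¹ * sr j := by rw [← hcd]; group
          rw [hd2, r_two_zpow, r_inv', r_mul_sr, sub_neg_eq_add]
        have hr2 : r (2 : ZMod n) ∈ N i := by
          have h1 : sr (j + ((2 * t : ℤ) : ZMod n)) ∈ N i := hde ▸ hd
          have h2 : r 1 * sr (j + ((2 * t : ℤ) : ZMod n)) * (r 1)⁻¹ ∈ N i :=
            (‹∀ i, (N i).Normal› i).conj_mem _ h1 _
          have h3 : (r 1 * sr (j + ((2 * t : ℤ) : ZMod n)) * (r 1)⁻¹) *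
              sr (j + ((2 * t : ℤ) : ZMod n)) ∈ N i := mul_mem h2 h1
          have heq : (r 1 * sr (j + ((2 * t : ℤ) : ZMod n)) * (r 1)⁻¹) *
              sr (j + ((2 * t : ℤ) : ZMod n)) = r (2 : ZMod n) := by
            rw [r_inv', r_mul_sr, sr_mul_r, sr_mul_sr]
            ring_nf
          rwa [heq] at h3
        exact (zpowers_le).mpr hr2
      have hCbot : C = ⊥ := le_bot_iff.mp (h ▸ le_iInf hCle)
      have hx2 : sr j ∈ (⨅ i, N i) := by
        refine mem_iInf.mpr fun i => ?_
        have hxi := hx' i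
        rwa [hCbot, bot_sup_eq] at hxi
      rw [h, Subgroup.mem_bot] at hx2
      rw [hx2]
      exact one_mem _
  · exact le_iInf fun i => le_sup_left
end

section
/- Let H be a nonabelian group of order p^3 for a prime p and let G = (Z/pZ) × H. Then there exist normal subgroups N_1, N_2 of G with N_1 ∩ N_2 = 1 such that G'N_1 ∩ G'N_2 strictly contains the derived subgroup G'. -/
open Subgroup
open scoped commutatorElement

lemma comm_le_center_aux {p : ℕ} (hp : p.Prime) {H : Type*} [Group H]
    (hcard : Nat.card H = p ^ 3) (hna : ∃ a b : H, a * b ≠ b * a) :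
    commutator H ≤ Subgroup.center H := by
  haveI : Fact p.Prime := ⟨hp⟩
  have hfin : Finite H := Nat.finite_of_card_ne_zero (by rw [hcard]; exact pow_ne_zero _ hp.pos.ne')
  have hpg : IsPGroup p H := IsPGroup.of_card hcard
  obtain ⟨k, hk0, hk⟩ := IsPGroup.card_center_eq_prime_pow hcard (by norm_num)
  have hdvd : p ^ k ∣ p ^ 3 := by
    rw [← hk, ← hcard]; exact Subgroup.card_subgroup_dvd_card _
  have hk3 : k ≤ 3 := (Nat.pow_dvd_pow_iff_le_right hp.one_lt).mp hdvd
  obtain ⟨a, b, hab⟩ := hna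
  have hq : Nat.card (H ⧸ center H) * p ^ k = p ^ 3 := by
    rw [← hk, ← hcard, mul_comm]
    exact (Subgroup.card_eq_card_quotient_mul_card_subgroup (center H)).symm ▸
      (mul_comm _ _)
  interval_cases k
  · -- k = 1 : quotient has order p^2
    have hq2 : Nat.card (H ⧸ center H) = p ^ 2 := by
      refine Nat.eq_of_mul_eq_mul_right hp.pos ?_
      rw [← pow_succ]
      simpa [pow_one] using hq
    letI : CommGroup (H ⧸ center H) := IsPGroup.commGroupOfCardEqPrimeSq hq2
    have := Abelianization.commutator_subset_ker (QuotientGroup.mk' (center H))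
    rwa [QuotientGroup.ker_mk'] at this
  · -- k = 2 : quotient has order p, cyclic, so H abelian: contradiction
    exfalso
    have hq1 : Nat.card (H ⧸ center H) = p := by
      have hpne : p ^ 2 ≠ 0 := (pow_pos hp.pos 2).ne'
      have : Nat.card (H ⧸ center H) * p ^ 2 = p * p ^ 2 := by
        rw [hq]; ring
      exact Nat.eq_of_mul_eq_mul_right (pow_pos hp.pos 2) this
    haveI : IsCyclic (H ⧸ center H) := isCyclic_of_prime_card hq1
    exact hab (commutative_of_cyclic_center_quotient (QuotientGroup.mk' (center H))
      (QuotientGroup.ker_mk' (center H)).le a b)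
  · -- k = 3 : center = top
    exfalso
    have : center H = ⊤ := by
      apply Subgroup.eq_top_of_card_eq
      rw [hk, hcard]
    exact hab (((Subgroup.mem_center_iff).mp (this ▸ Subgroup.mem_top b)) a)

/-- Let `H` be a nonabelian group of order `p³` and `G = (ℤ/pℤ) × H`. Then there are
normal subgroups `N₁, N₂` of `G` with `N₁ ∩ N₂ = 1` such that `G'N₁ ∩ G'N₂` strictly
contains the derived subgroup `G'`. -/
theorem stmt7 {p : ℕ} (hp : p.Prime) {H : Type*} [Group H]
    (hcard : Nat.card H = p ^ 3) (hna : ∃ a b : H, a * b ≠ b * a) :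
    ∃ N₁ N₂ : Subgroup (Multiplicative (ZMod p) × H),
      N₁.Normal ∧ N₂.Normal ∧ N₁ ⊓ N₂ = ⊥ ∧
      commutator (Multiplicative (ZMod p) × H) <
        (commutator (Multiplicative (ZMod p) × H) ⊔ N₁) ⊓
          (commutator (Multiplicative (ZMod p) × H) ⊔ N₂) := by
  haveI : Fact p.Prime := ⟨hp⟩
  set A := Multiplicative (ZMod p)
  obtain ⟨a, b, hab⟩ := hna
  set β : H := ⁅a, b⁆ with hβdef
  have hβ1 : β ≠ 1 := by
    simpa [hβdef, commutatorElement_eq_one_iff_mul_comm] using hab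
  have hβC : β ∈ commutator H :=
    Subgroup.commutator_mem_commutator (Subgroup.mem_top a) (Subgroup.mem_top b)
  have hβZ : β ∈ Subgroup.center H := comm_le_center_aux hp hcard ⟨a, b, hab⟩ hβC
  -- the generator of the ℤ/p factor
  set x : A := Multiplicative.ofAdd (1 : ZMod p) with hxdef
  have hx1 : x ≠ 1 := by
    simp only [hxdef, ne_eq]
    intro h
    exact one_ne_zero (Multiplicative.ofAdd.injective h)
  -- order of β is divisible by p
  have hβord : (p : ℤ) ∣ (orderOf β : ℤ) := by
    have h1 : orderOf β ∣ p ^ 3 := hcard ▸ orderOf_dvd_natCard β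
    obtain ⟨j, hj3, hj⟩ := (Nat.dvd_prime_pow hp).mp h1
    have hj0 : j ≠ 0 := by
      rintro rfl
      exact hβ1 (orderOf_eq_one_iff.mp (by simpa using hj))
    exact_mod_cast hj ▸ dvd_pow_self p hj0
  -- x^m = 1 when p ∣ m
  have hxpow : ∀ m : ℤ, (p : ℤ) ∣ m → x ^ m = 1 := by
    intro m hm
    have : x ^ m = Multiplicative.ofAdd ((m : ZMod p) • (1 : ZMod p)) := by
      rw [hxdef, ← ofAdd_zsmul]
      norm_num
    rw [this, (ZMod.intCast_zmod_eq_zero_iff_dvd m p).mpr hm]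
    simp
  have hcx : ((x, (1:H)) : A × H) ∈ Subgroup.center (A × H) := by
    rw [Subgroup.mem_center_iff]
    rintro ⟨u, v⟩
    ext
    · simp [mul_comm]
    · simp
  have hc : ((x, β) : A × H) ∈ Subgroup.center (A × H) := by
    rw [Subgroup.mem_center_iff]
    rintro ⟨u, v⟩
    ext
    · simp [mul_comm]
    · exact ((Subgroup.mem_center_iff.mp hβZ) v)
  have hnorm : ∀ c : A × H, c ∈ Subgroup.center (A × H) →
      (Subgroup.zpowers c).Normal := by
    intro c hcc
    constructor
    intro n hn g
    obtain ⟨m, rfl⟩ := hn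
    refine ⟨m, ?_⟩
    have hcm : c ^ m ∈ Subgroup.center (A × H) := Subgroup.zpow_mem _ hcc m
    show c ^ m = g * c ^ m * g⁻¹
    rw [Subgroup.mem_center_iff.mp hcm g]
    rw [mul_inv_cancel_right]
  refine ⟨Subgroup.zpowers (x, (1 : H)), Subgroup.zpowers (x, β),
    hnorm _ hcx, hnorm _ hc, ?_, ?_⟩
  · -- trivial intersection
    rw [eq_bot_iff]
    rintro ⟨u, v⟩ ⟨⟨n, hn⟩, ⟨m, hm⟩⟩
    simp only [Prod.pow_mk, Prod.mk.injEq] at hn hm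
    obtain ⟨hn1, hn2⟩ := hn
    obtain ⟨hm1, hm2⟩ := hm
    have hβm : β ^ m = 1 := by rw [hm2, ← hn2, one_zpow]
    have hpm : (p : ℤ) ∣ m := hβord.trans (orderOf_dvd_iff_zpow_eq_one.mpr hβm)
    have hu : u = 1 := by rw [← hm1, hxpow m hpm]
    have hv : v = 1 := by rw [← hn2, one_zpow]
    rw [Subgroup.mem_bot]
    exact Prod.ext hu hv
  · -- strict inclusion
    have hG' : commutator (A × H) =
        (commutator A).prod (commutator H) := by
      rw [_root_.commutator_def, ← Subgroup.top_prod_top, Subgroup.commutator_prod_prod,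
        ← _root_.commutator_def, ← _root_.commutator_def]
    have hAbot : commutator A = ⊥ := by
      rw [_root_.commutator_def, Subgroup.commutator_eq_bot_iff_le_centralizer]
      intro g _
      exact Subgroup.mem_centralizer_iff.mpr fun h _ => mul_comm h g
    rw [lt_iff_le_and_ne]
    constructor
    · exact le_inf le_sup_left le_sup_left
    · intro heq
      have hmem : (x, (1:H)) ∈ (commutator (A × H) ⊔ Subgroup.zpowers (x, (1:H))) ⊓
          (commutator (A × H) ⊔ Subgroup.zpowers (x, β)) := by
        constructor
        · exact Subgroup.mem_sup_right (Subgroup.mem_zpowers _)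
        · have h1 : (x, β) ∈ commutator (A × H) ⊔ Subgroup.zpowers (x, β) :=
            Subgroup.mem_sup_right (Subgroup.mem_zpowers _)
          have h2 : ((1:A), β) ∈ commutator (A × H) ⊔ Subgroup.zpowers (x, β) := by
            apply Subgroup.mem_sup_left
            rw [hG']
            exact ⟨hAbot ▸ Subgroup.mem_bot.mpr rfl, hβC⟩
          have := mul_mem h1 (inv_mem h2)
          simpa using this
      rw [← heq, hG'] at hmem
      exact hx1 (Subgroup.mem_bot.mp (hAbot ▸ hmem.1))
end

section
/- Let G be a finite group and N_1, ..., N_n normal subgroups. A homomorphism f : G → Q/Z can be written as f = f_1 + ⋯ + f_n with each f_i : G → Q/Z a homomorphism vanishing on N_i, if and only if f vanishes on the intersection ∩_{i=1}^n G'N_i. -/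
open scoped commutatorElement

/-- A quotient by a normal subgroup containing the commutator subgroup is commutative. -/
@[reducible]
private def quotCommGroup {G : Type*} [Group G] (K : Subgroup G) [K.Normal]
    (h : commutator G ≤ K) : CommGroup (G ⧸ K) :=
  { (inferInstance : Group (G ⧸ K)) with
    mul_comm := by
      rintro ⟨a⟩ ⟨b⟩
      show QuotientGroup.mk (a * b) = QuotientGroup.mk (b * a)
      rw [QuotientGroup.eq]
      have hmem : ⁅b⁻¹, a⁻¹⁆ ∈ commutator G := by
        rw [commutator_def]
        exact Subgroup.commutator_mem_commutator (Subgroup.mem_top _) (Subgroup.mem_top _)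
      have : (a * b)⁻¹ * (b * a) = ⁅b⁻¹, a⁻¹⁆ := by
        simp [commutatorElement_def, mul_assoc]
      rw [this]
      exact h hmem }

/-- For a finite group `G` with normal subgroups `N₁, …, Nₙ`, a homomorphism
`f : G → ℚ/ℤ` decomposes as `f = f₁ + ⋯ + fₙ` with each `fᵢ` vanishing on `Nᵢ`
iff `f` vanishes on `⋂ᵢ G'Nᵢ`. (Here `ℚ/ℤ` is written multiplicatively.) -/
theorem stmt9 {G : Type*} [Group G] [Finite G] {n : ℕ}
    (N : Fin n → Subgroup G) [∀ i, (N i).Normal]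
    (f : G →* Multiplicative (AddCircle (1 : ℚ))) :
    (∃ F : Fin n → (G →* Multiplicative (AddCircle (1 : ℚ))),
        (∀ i, ∀ x ∈ N i, F i x = 1) ∧ f = ∏ i, F i) ↔
      ∀ x ∈ ⨅ i, commutator G ⊔ N i, f x = 1 := by
  classical
  constructor
  · rintro ⟨F, hF, rfl⟩ x hx
    rw [MonoidHom.finset_prod_apply]
    refine Finset.prod_eq_one fun i _ => ?_
    have hxi : x ∈ commutator G ⊔ N i := (Subgroup.mem_iInf.mp hx) i
    have hle : commutator G ⊔ N i ≤ (F i).ker :=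
      sup_le (Abelianization.commutator_subset_ker (F i)) (fun y hy => hF i y hy)
    exact hle hxi
  · intro hf
    set K : Fin n → Subgroup G := fun i => commutator G ⊔ N i with hK
    letI : ∀ i, CommGroup (G ⧸ K i) := fun i => quotCommGroup (K i) le_sup_left
    let φ : G →* ∀ i, G ⧸ K i := Pi.monoidHom fun i => QuotientGroup.mk' (K i)
    have hker : φ.ker ≤ f.ker := by
      intro x hx
      apply hf
      rw [Subgroup.mem_iInf]
      intro i
      have hx1 : φ x i = 1 := congrFun (hx : φ x = 1) i
      exact (QuotientGroup.eq_one_iff x).mp hx1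
    let g : ↥φ.range →* Multiplicative (AddCircle (1 : ℚ)) :=
      (QuotientGroup.lift φ.ker f hker).comp
        (QuotientGroup.quotientKerEquivRange φ).symm.toMonoidHom
    have hg : ∀ x : G, g (φ.rangeRestrict x) = f x := by
      intro x
      have h1 : (QuotientGroup.quotientKerEquivRange φ) (QuotientGroup.mk x)
          = φ.rangeRestrict x := rfl
      have h2 : (QuotientGroup.quotientKerEquivRange φ).symm (φ.rangeRestrict x)
          = QuotientGroup.mk x := by
        rw [← h1, MulEquiv.symm_apply_apply]
      show (QuotientGroup.lift φ.ker f hker)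
          ((QuotientGroup.quotientKerEquivRange φ).symm (φ.rangeRestrict x)) = f x
      rw [h2]
      rfl
    let ι : Additive ↥φ.range →+ Additive (∀ i, G ⧸ K i) :=
      MonoidHom.toAdditive φ.range.subtype
    have hι : Function.Injective ι := fun a b h => φ.range.subtype_injective h
    obtain ⟨h, hh⟩ := (Module.Baer.of_divisible
      (AddCircle (1 : ℚ))).extension_property_addMonoidHom ι hι (MonoidHom.toAdditiveLeft g)
    let H : (∀ i, G ⧸ K i) →* Multiplicative (AddCircle (1 : ℚ)) :=
      AddMonoidHom.toMultiplicativeRight h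
    have hH : ∀ x : G, H (φ x) = f x := by
      intro x
      have := DFunLike.congr_fun hh (Additive.ofMul (φ.rangeRestrict x))
      have hx : h (Additive.ofMul (φ x)) = Multiplicative.toAdd (f x) := by
        rw [← hg x]
        exact this
      show Multiplicative.ofAdd (h (Additive.ofMul (φ x))) = f x
      rw [hx]
      rfl
    refine ⟨fun i => H.comp ((MonoidHom.mulSingle (fun i => G ⧸ K i) i).comp
      (QuotientGroup.mk' (K i))), fun i x hx => ?_, ?_⟩
    · have hx1 : (QuotientGroup.mk x : G ⧸ K i) = 1 :=
        (QuotientGroup.eq_one_iff x).mpr ((le_sup_right : N i ≤ K i) hx)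
      show H (Pi.mulSingle i (QuotientGroup.mk x : G ⧸ K i)) = 1
      rw [hx1, Pi.mulSingle_one, map_one]
    · ext x
      rw [MonoidHom.finset_prod_apply]
      simp only [MonoidHom.comp_apply]
      rw [← map_prod H]
      have : (∏ i, (MonoidHom.mulSingle (fun i => G ⧸ K i) i) ((QuotientGroup.mk' (K i)) x))
          = φ x := Finset.univ_prod_mulSingle (φ x)
      rw [this, hH]
end

section
/- Let G be a finite group and N_1, ..., N_n normal subgroups with ∩_i G'N_i = G'. Then the sum map χ : Hom(G/N_1, Q/Z) × ⋯ × Hom(G/N_n, Q/Z) → Hom(G, Q/Z), sending (f_1, ..., f_n) to the homomorphism g ↦ ∑_i f_i(g N_i), is surjective. -/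
universe u

lemma ext_addCircle {A B : Type u} [AddCommGroup A] [AddCommGroup B]
    (f : A →+ B) (hf : Function.Injective f) (g : A →+ AddCircle (1 : ℚ)) :
    ∃ h : B →+ AddCircle (1 : ℚ), ∀ a, h (f a) = g a := by
  have baer : Module.Baer ℤ (AddCircle (1 : ℚ)) := Module.Baer.of_divisible _
  have inj0 : Module.Injective ℤ (AddCircle (1 : ℚ)) := baer.injective
  have inj : Module.Injective ℤ (ULift.{u} (AddCircle (1 : ℚ))) :=
    Module.ulift_injective_of_injective ℤ inj0
  obtain ⟨h, hh⟩ := inj.out f.toIntLinearMap hf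
    (ULift.moduleEquiv.symm.toLinearMap ∘ₗ g.toIntLinearMap)
  refine ⟨(ULift.moduleEquiv.toLinearMap ∘ₗ h).toAddMonoidHom, fun a => ?_⟩
  simpa using congrArg ULift.down (hh a)

/-- If `G` is a finite group with normal subgroups `N₁, …, Nₙ` satisfying
`⋂ᵢ G'Nᵢ = G'`, then the sum map
`Hom(G/N₁, ℚ/ℤ) × ⋯ × Hom(G/Nₙ, ℚ/ℤ) → Hom(G, ℚ/ℤ)` is surjective. -/
theorem stmt19 {G : Type*} [Group G] [Finite G] {n : ℕ}
    (N : Fin n → Subgroup G) [∀ i, (N i).Normal]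
    (h : (⨅ i, commutator G ⊔ N i) = commutator G) :
    Function.Surjective
      (fun F : ∀ i, (G ⧸ N i) →* Multiplicative (AddCircle (1 : ℚ)) =>
        ∏ i, (F i).comp (QuotientGroup.mk' (N i))) := by
  intro φ
  classical
  set A := Abelianization G
  set ab : G →* A := Abelianization.of with hab
  have hker : ab.ker = commutator G := by
    ext x
    exact QuotientGroup.eq_one_iff x
  set M : Fin n → Subgroup A := fun i => (N i).map ab with hM
  have hcomap : ∀ i, (M i).comap ab = commutator G ⊔ N i := by
    intro i
    rw [hM, Subgroup.comap_map_eq, hker, sup_comm]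
  -- the embedding of A into the product
  set e : A →* ∀ i, A ⧸ M i := Pi.monoidHom (fun i => QuotientGroup.mk' (M i)) with he
  have hinj : Function.Injective e := by
    rw [← MonoidHom.ker_eq_bot_iff]
    rw [eq_bot_iff]
    intro x hx
    have hsurj : Function.Surjective ab := fun x => Quotient.inductionOn' x fun g => ⟨g, rfl⟩
    obtain ⟨g, rfl⟩ := hsurj x
    have hx' : ∀ i, ab g ∈ M i := by
      intro i
      have : e (ab g) i = 1 := by rw [MonoidHom.mem_ker.mp hx]; rfl
      simpa [he, Pi.monoidHom, QuotientGroup.eq_one_iff] using this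
    have : g ∈ ⨅ i, commutator G ⊔ N i := by
      rw [Subgroup.mem_iInf]
      intro i
      rw [← hcomap i]
      exact hx' i
    rw [h, ← hker] at this
    simpa [Subgroup.mem_bot] using MonoidHom.mem_ker.mp this
  set ψ : A →* Multiplicative (AddCircle (1 : ℚ)) := Abelianization.lift φ with hψ
  -- additive versions
  obtain ⟨hext, hhext⟩ := ext_addCircle (MonoidHom.toAdditive e)
    (by simpa [MonoidHom.coe_toAdditive] using hinj) (MonoidHom.toAdditiveLeft ψ)
  set Ψ : (∀ i, A ⧸ M i) →* Multiplicative (AddCircle (1 : ℚ)) :=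
    MonoidHom.toAdditiveLeft.symm hext with hΨ
  have key : ∀ a : A, Ψ (e a) = ψ a := by
    intro a
    have := hhext (Additive.ofMul a)
    apply Multiplicative.toAdd.injective
    simpa [MonoidHom.coe_toAdditive, MonoidHom.coe_toAdditiveLeft, hΨ,
      MonoidHom.toAdditiveLeft] using this
  have hle : ∀ i, N i ≤ (M i).comap ab := fun i => Subgroup.le_comap_map _ _
  refine ⟨fun i => Ψ.comp ((MonoidHom.mulSingle (fun i => A ⧸ M i) i).comp
    (QuotientGroup.map (N i) (M i) ab (hle i))), ?_⟩
  ext g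
  simp only [MonoidHom.finset_prod_apply, MonoidHom.coe_comp, Function.comp_apply,
    QuotientGroup.mk'_apply]
  have hmap : ∀ i, QuotientGroup.map (N i) (M i) ab (hle i) (QuotientGroup.mk g)
      = QuotientGroup.mk (ab g) := fun i => rfl
  calc ∏ i, Ψ ((MonoidHom.mulSingle (fun i => A ⧸ M i) i)
        (QuotientGroup.map (N i) (M i) ab (hle i) (QuotientGroup.mk g)))
      = Ψ (∏ i, Pi.mulSingle i ((fun i => (QuotientGroup.mk (ab g) : A ⧸ M i)) i)) := by
        rw [map_prod]; simp [hmap, MonoidHom.mulSingle]; rfl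
    _ = Ψ (fun i => (QuotientGroup.mk (ab g) : A ⧸ M i)) := by
        rw [Finset.univ_prod_mulSingle]
    _ = ψ (ab g) := key (ab g)
    _ = φ g := rfl
end
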